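/- Let K ≥ 1 and let q₁, …, q_K be real numbers (logits). Let g₁, …, g_K be independent, identically distributed real random variables each following the standard Gumbel distribution, i.e. with cumulative distribution function F(x) = exp(−exp(−x)). Then for every index j, the probability that q_j + g_j is strictly greater than q_i + g_i for all i ≠ j equals the softmax probability exp(q_j) / ∑_{i=1}^{K} exp(q_i). -/

import Mathlib

open MeasureTheory ProbabilityTheory Real Set Filter
open scoped ENNReal

namespace GumbelMax

lemma lintegral_image_eq {s : Set ℝ} {f f' : ℝ → ℝ}
    (hs : MeasurableSet s) (hf' : ∀ x ∈ s, HasDerivWithinAt f (f' x) s x)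
    (hf : Set.InjOn f s) (g : ℝ → ℝ≥0∞) :
    ∫⁻ x in f '' s, g x = ∫⁻ x in s, ENNReal.ofReal |f' x| * g (f x) := by
  simpa only [ContinuousLinearMap.det_toSpanSingleton] using
    lintegral_image_eq_lintegral_abs_det_fderiv_mul volume hs
      (fun x hx => (hf' x hx).hasFDerivWithinAt) hf g

lemma hasDerivAt_exp_neg (t : ℝ) :
    HasDerivAt (fun t : ℝ => Real.exp (-t)) (-Real.exp (-t)) t := by
  simpa [Function.comp_def] using ((Real.hasDerivAt_exp (-t)).comp t (hasDerivAt_neg t))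

lemma sub_lemma (s : Set ℝ) (hs : MeasurableSet s) (g : ℝ → ℝ≥0∞) :
    ∫⁻ u in (fun t : ℝ => Real.exp (-t)) '' s, g u
      = ∫⁻ t in s, ENNReal.ofReal (Real.exp (-t)) * g (Real.exp (-t)) := by
  have h := lintegral_image_eq (f := fun t : ℝ => Real.exp (-t))
    (f' := fun t : ℝ => -Real.exp (-t)) hs
    (fun x _ => (hasDerivAt_exp_neg x).hasDerivWithinAt)
    ((Real.exp_injective.comp neg_injective).injOn) g
  simpa [abs_of_pos (Real.exp_pos _)] using h

lemma exp_integral_Ioi (a b : ℝ) (ha : 0 < a) :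
    ∫ u in Ioi b, Real.exp (-(a * u)) = Real.exp (-(a * b)) / a := by
  have hderiv : ∀ x ∈ Ici b, HasDerivAt (fun u : ℝ => -(Real.exp (-(a * u)) / a))
      (Real.exp (-(a * x))) x := by
    intro x _
    have h1 : HasDerivAt (fun u : ℝ => -(a * u)) (-a) x := by
      simpa [Pi.neg_def] using ((hasDerivAt_id x).const_mul a).neg
    have h2 := (Real.hasDerivAt_exp (-(a * x))).comp x h1
    have h3 := (h2.div_const a).neg
    refine h3.congr_deriv ?_
    field_simp
  have hint : IntegrableOn (fun u : ℝ => Real.exp (-(a * u))) (Ioi b) := by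
    simpa [neg_mul] using exp_neg_integrableOn_Ioi b ha
  have htend : Tendsto (fun u : ℝ => -(Real.exp (-(a * u)) / a)) atTop (nhds 0) := by
    have : Tendsto (fun u : ℝ => -(a * u)) atTop atBot := by
      apply Filter.tendsto_neg_atBot_iff.mpr
      exact Filter.Tendsto.const_mul_atTop ha tendsto_id
    have := (Real.tendsto_exp_atBot.comp this).div_const a
    simpa using this.neg
  have := integral_Ioi_of_hasDerivAt_of_tendsto
    (f := fun u : ℝ => -(Real.exp (-(a * u)) / a))
    (f' := fun u : ℝ => Real.exp (-(a * u)))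
    ((hderiv b (self_mem_Ici)).continuousAt.continuousWithinAt)
    (fun x hx => hderiv x (Ioi_subset_Ici_self hx)) hint htend
  rw [this]; ring

lemma exp_lintegral_Ici (a b : ℝ) (ha : 0 < a) :
    ∫⁻ u in Ici b, ENNReal.ofReal (Real.exp (-(a * u)))
      = ENNReal.ofReal (Real.exp (-(a * b)) / a) := by
  rw [← setLIntegral_congr (Ioi_ae_eq_Ici (a := b)), ← exp_integral_Ioi a b ha]
  rw [← ofReal_integral_eq_lintegral_ofReal]
  · simpa [neg_mul, IntegrableOn] using exp_neg_integrableOn_Ioi b ha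
  · exact Filter.Eventually.of_forall (fun x => (Real.exp_pos _).le)

lemma exp_lintegral_Ioi_zero (a : ℝ) (ha : 0 < a) :
    ∫⁻ u in Ioi (0:ℝ), ENNReal.ofReal (Real.exp (-(a * u)))
      = ENNReal.ofReal (1 / a) := by
  rw [setLIntegral_congr (Ioi_ae_eq_Ici (a := (0:ℝ))), exp_lintegral_Ici a 0 ha]
  simp

lemma image_exp_neg_univ : (fun t : ℝ => Real.exp (-t)) '' univ = Ioi 0 := by
  ext u
  simp only [image_univ, mem_range, mem_Ioi]
  constructor
  · rintro ⟨t, rfl⟩; exact Real.exp_pos _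
  · intro hu; exact ⟨-Real.log u, by simp [Real.exp_log hu]⟩

lemma image_exp_neg_Iic (x : ℝ) :
    (fun t : ℝ => Real.exp (-t)) '' Iic x = Ici (Real.exp (-x)) := by
  ext u
  simp only [mem_image, mem_Iic, mem_Ici]
  constructor
  · rintro ⟨t, ht, rfl⟩; exact Real.exp_le_exp.2 (neg_le_neg ht)
  · intro hu
    have hu0 : 0 < u := lt_of_lt_of_le (Real.exp_pos _) hu
    refine ⟨-Real.log u, ?_, by simp [Real.exp_log hu0]⟩
    have := Real.log_le_log (Real.exp_pos _) hu
    rw [Real.log_exp] at this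
    linarith

/-- The standard Gumbel measure as Lebesgue measure with density. -/
noncomputable def gumbel : Measure ℝ :=
  volume.withDensity (fun t => ENNReal.ofReal (Real.exp (-t - Real.exp (-t))))

lemma density_eq (a t : ℝ) :
    ENNReal.ofReal (Real.exp (-t)) * ENNReal.ofReal (Real.exp (-(a * Real.exp (-t))))
      = ENNReal.ofReal (Real.exp (-t - a * Real.exp (-t))) := by
  rw [← ENNReal.ofReal_mul (Real.exp_pos _).le, ← Real.exp_add]
  ring_nf

/-- Key computation: `∫ exp (-(a * exp (-t)))` against the gumbel density over `s`. -/
lemma gumbel_calc_Iic (a x : ℝ) (ha : 0 < a) :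
    ∫⁻ t in Iic x, ENNReal.ofReal (Real.exp (-t)) *
      ENNReal.ofReal (Real.exp (-(a * Real.exp (-t))))
      = ENNReal.ofReal (Real.exp (-(a * Real.exp (-x))) / a) := by
  rw [← sub_lemma (Iic x) measurableSet_Iic
      (fun u => ENNReal.ofReal (Real.exp (-(a * u)))),
    image_exp_neg_Iic, exp_lintegral_Ici a _ ha]

lemma gumbel_calc_univ (a : ℝ) (ha : 0 < a) :
    ∫⁻ t, ENNReal.ofReal (Real.exp (-t)) *
      ENNReal.ofReal (Real.exp (-(a * Real.exp (-t))))
      = ENNReal.ofReal (1 / a) := by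
  have := sub_lemma univ MeasurableSet.univ
      (fun u => ENNReal.ofReal (Real.exp (-(a * u))))
  rw [image_exp_neg_univ] at this
  rw [← Measure.restrict_univ (μ := volume), ← this, exp_lintegral_Ioi_zero a ha]

lemma gumbel_Iic (x : ℝ) :
    gumbel (Iic x) = ENNReal.ofReal (Real.exp (-Real.exp (-x))) := by
  rw [gumbel, withDensity_apply _ measurableSet_Iic]
  have h : ∀ t : ℝ, ENNReal.ofReal (Real.exp (-t - Real.exp (-t)))
      = ENNReal.ofReal (Real.exp (-t)) * ENNReal.ofReal (Real.exp (-(1 * Real.exp (-t)))) := by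
    intro t; rw [density_eq]; ring_nf
  simp_rw [h]
  rw [gumbel_calc_Iic 1 x one_pos]
  norm_num

instance : IsProbabilityMeasure gumbel := by
  constructor
  rw [gumbel, withDensity_apply _ MeasurableSet.univ, Measure.restrict_univ]
  have h : ∀ t : ℝ, ENNReal.ofReal (Real.exp (-t - Real.exp (-t)))
      = ENNReal.ofReal (Real.exp (-t)) * ENNReal.ofReal (Real.exp (-(1 * Real.exp (-t)))) := by
    intro t; rw [density_eq]; ring_nf
  simp_rw [h]
  rw [gumbel_calc_univ 1 one_pos]
  norm_num

lemma gumbel_Iio (x : ℝ) :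
    gumbel (Iio x) = ENNReal.ofReal (Real.exp (-Real.exp (-x))) := by
  rw [← gumbel_Iic]
  apply measure_congr
  have h := Iio_ae_eq_Iic (a := x) (μ := volume)
  have hac : gumbel ≪ volume := withDensity_absolutelyContinuous _ _
  exact (Filter.EventuallyEq.filter_mono h (Measure.ae_mono' hac))


theorem main
    {Ω : Type*} [MeasurableSpace Ω] (P : Measure Ω) [IsProbabilityMeasure P]
    (K : ℕ) (hK : 1 ≤ K) (q : Fin K → ℝ) (g : Fin K → Ω → ℝ)
    (hmeas : ∀ i, Measurable (g i))
    (hindep : iIndepFun g P)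
    (hcdf : ∀ i, ∀ x : ℝ, P {ω | g i ω ≤ x} = ENNReal.ofReal (Real.exp (-Real.exp (-x))))
    (j : Fin K) :
    P {ω | ∀ i, i ≠ j → q i + g i ω < q j + g j ω}
      = ENNReal.ofReal (Real.exp (q j) / ∑ i, Real.exp (q i)) := by
  obtain ⟨n, rfl⟩ : ∃ n, K = n + 1 := ⟨K - 1, (Nat.succ_pred_eq_of_pos hK).symm⟩
  -- the map to the product space
  set Φ : Ω → (Fin (n+1) → ℝ) := fun ω i => g i ω with hΦdef
  have hΦ : Measurable Φ := measurable_pi_iff.mpr hmeas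
  -- marginal laws
  have hmap : ∀ i, Measure.map (g i) P = gumbel := by
    intro i
    have : IsProbabilityMeasure (Measure.map (g i) P) :=
      Measure.isProbabilityMeasure_map (hmeas i).aemeasurable
    refine Measure.ext_of_Iic _ _ fun x => ?_
    rw [Measure.map_apply (hmeas i) measurableSet_Iic, gumbel_Iic]
    exact hcdf i x
  -- joint law
  have hjoint : Measure.map Φ P = Measure.pi (fun _ : Fin (n+1) => gumbel) := by
    refine (Measure.pi_eq fun s hs => ?_).symm
    rw [Measure.map_apply hΦ (MeasurableSet.univ_pi hs)]
    have hpre : Φ ⁻¹' (Set.pi univ s) = ⋂ i, g i ⁻¹' s i := by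
      ext ω; simp [Φ, Set.mem_pi]
    rw [hpre, hindep.meas_iInter (fun i => ⟨s i, hs i, rfl⟩)]
    exact Finset.prod_congr rfl fun i _ => by
      rw [← Measure.map_apply (hmeas i) (hs i), hmap i]
  -- the target set in the product space
  set S : Set (Fin (n+1) → ℝ) := {x | ∀ i, i ≠ j → q i + x i < q j + x j} with hSdef
  set T : Set (ℝ × (Fin n → ℝ)) :=
    {p | ∀ k, q (j.succAbove k) + p.2 k < q j + p.1} with hTdef
  have hT : MeasurableSet T := by
    have : T = ⋂ k, {p : ℝ × (Fin n → ℝ) | q (j.succAbove k) + p.2 k < q j + p.1} := by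
      ext p; simp [T]
    rw [this]
    exact MeasurableSet.iInter fun k =>
      measurableSet_lt (((measurable_pi_apply k).comp measurable_snd).const_add _)
        (measurable_fst.const_add _)
  set e := MeasurableEquiv.piFinSuccAbove (fun _ : Fin (n+1) => ℝ) j with hedef
  have hST : S = e ⁻¹' T := by
    ext x
    simp only [hSdef, hTdef, mem_setOf_eq, mem_preimage, hedef,
      MeasurableEquiv.piFinSuccAbove, MeasurableEquiv.coe_mk, Equiv.symm_symm,
      Fin.insertNthEquiv, Equiv.coe_fn_symm_mk, Fin.removeNth]
    constructor
    · intro h k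
      exact h (j.succAbove k) (Fin.succAbove_ne j k)
    · intro h i hi
      obtain ⟨k, rfl⟩ := Fin.exists_succAbove_eq hi
      exact h k
  have hS : MeasurableSet S := by rw [hST]; exact e.measurable hT
  -- rewrite the probability as the product measure of S
  have hev : {ω | ∀ i, i ≠ j → q i + g i ω < q j + g j ω} = Φ ⁻¹' S := rfl
  rw [hev, ← Measure.map_apply hΦ hS, hjoint, hST,
    (measurePreserving_piFinSuccAbove (fun _ : Fin (n+1) => gumbel) j).measure_preimage
      hT.nullMeasurableSet,
    Measure.prod_apply hT]
  -- compute the inner measure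
  set c : ℝ := ∑ k : Fin n, Real.exp (q (j.succAbove k) - q j) with hcdef
  have hc0 : 0 ≤ c := Finset.sum_nonneg fun _ _ => (Real.exp_pos _).le
  have h1c : 0 < 1 + c := by linarith
  have hinner : ∀ t : ℝ,
      (Measure.pi fun _ : Fin n => gumbel) (Prod.mk t ⁻¹' T)
        = ENNReal.ofReal (Real.exp (-(c * Real.exp (-t)))) := by
    intro t
    have hset : Prod.mk t ⁻¹' T
        = Set.pi univ (fun k : Fin n => Iio (q j + t - q (j.succAbove k))) := by
      ext y
      simp only [hTdef, mem_preimage, mem_setOf_eq, Set.mem_pi, mem_univ, true_implies, mem_Iio]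
      exact forall_congr' fun k => by constructor <;> intro h <;> linarith
    rw [hset, Measure.pi_pi]
    simp_rw [gumbel_Iio]
    rw [← ENNReal.ofReal_prod_of_nonneg fun _ _ => (Real.exp_pos _).le]
    congr 1
    rw [← Real.exp_sum]
    congr 1
    rw [hcdef, Finset.sum_mul, ← Finset.sum_neg_distrib]
    refine Finset.sum_congr rfl fun k _ => ?_
    rw [← Real.exp_add]
    congr 1
    ring
  simp_rw [hinner]
  -- integrate against the gumbel measure
  rw [gumbel, lintegral_withDensity_eq_lintegral_mul _
    (by fun_prop) (by fun_prop)]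
  have hdens : ∀ t : ℝ,
      ((fun t => ENNReal.ofReal (Real.exp (-t - Real.exp (-t)))) *
        (fun t => ENNReal.ofReal (Real.exp (-(c * Real.exp (-t)))))) t
      = ENNReal.ofReal (Real.exp (-t)) *
          ENNReal.ofReal (Real.exp (-((1 + c) * Real.exp (-t)))) := by
    intro t
    simp only [Pi.mul_apply]
    rw [density_eq, ← ENNReal.ofReal_mul (Real.exp_pos _).le, ← Real.exp_add]
    congr 1
    ring
  simp_rw [hdens]
  rw [gumbel_calc_univ (1 + c) h1c]
  congr 1
  have hsum : ∑ i, Real.exp (q i)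
      = Real.exp (q j) + ∑ k : Fin n, Real.exp (q (j.succAbove k)) :=
    Fin.sum_univ_succAbove (fun i => Real.exp (q i)) j
  have hc : c = (∑ k : Fin n, Real.exp (q (j.succAbove k))) / Real.exp (q j) := by
    rw [hcdef, Finset.sum_div]
    exact Finset.sum_congr rfl fun k _ => by rw [Real.exp_sub]
  rw [hsum, hc]
  field_simp

end GumbelMax

/-- **The Gumbel-Max Trick.** Let `q 1, …, q K` be real logits and `g 1, …, g K` be i.i.d.
random variables with the standard Gumbel distribution, whose CDF is
`F x = exp (-exp (-x))`. Then for every index `j`, the probability that `q j + g j`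
strictly exceeds `q i + g i` for all `i ≠ j` equals the softmax probability
`exp (q j) / ∑ i, exp (q i)`. -/
theorem gumbel_max_trick
    {Ω : Type*} [MeasurableSpace Ω] (P : Measure Ω) [IsProbabilityMeasure P]
    (K : ℕ) (hK : 1 ≤ K) (q : Fin K → ℝ) (g : Fin K → Ω → ℝ)
    (hmeas : ∀ i, Measurable (g i))
    (hindep : iIndepFun g P)
    (hcdf : ∀ i, ∀ x : ℝ, P {ω | g i ω ≤ x} = ENNReal.ofReal (Real.exp (-Real.exp (-x))))
    (j : Fin K) :
    P {ω | ∀ i, i ≠ j → q i + g i ω < q j + g j ω}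
      = ENNReal.ofReal (Real.exp (q j) / ∑ i, Real.exp (q i)) := by
  exact GumbelMax.main P K hK q g hmeas hindep hcdf j
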